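/- Let K be a nontrivially normed field which is locally compact and whose norm is ultrametric, with ‖(2:K)‖ = 1. Let q be a quadratic form on Kⁿ (n ≥ 0) whose associated bilinear form is nondegenerate. Then there exists a K-basis (e_i) of Kⁿ such that: (1) for every x : Fin n → K, ‖∑ i, x i • e i‖ = ‖x‖, where ‖·‖ denotes the sup norm on Kⁿ (so the base change to (e_i) preserves the sup norm); and (2) the basis is orthogonal for q, i.e., the polar form of q vanishes on (e_i, e_j) for all i ≠ j. -/

import Mathlib

open Finset Matrix

section helpers
variable {K : Type*} [NontriviallyNormedField K]

private lemma mySumLe (hu : ∀ x y : K, ‖x + y‖ ≤ max ‖x‖ ‖y‖) {ι : Type*} (s : Finset ι)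
    (f : ι → K) (c : ℝ) (hc : 0 ≤ c) (h : ∀ i ∈ s, ‖f i‖ ≤ c) : ‖∑ i ∈ s, f i‖ ≤ c := by
  classical
  induction s using Finset.induction_on with
  | empty => simpa using hc
  | insert a s ha ih =>
      rw [Finset.sum_insert ha]
      exact le_trans (hu _ _) (max_le (h _ (Finset.mem_insert_self _ _))
        (ih fun i hi => h i (Finset.mem_insert_of_mem hi)))

private lemma myDetLe (hu : ∀ x y : K, ‖x + y‖ ≤ max ‖x‖ ‖y‖) {m : ℕ}
    (A : Matrix (Fin m) (Fin m) K) (hA : ∀ i j, ‖A i j‖ ≤ 1) : ‖A.det‖ ≤ 1 := by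
  rw [Matrix.det_apply]
  refine mySumLe hu _ _ _ zero_le_one fun σ _ => ?_
  have h1 : ‖∏ i, A (σ i) i‖ ≤ 1 := by
    rw [norm_prod]
    exact Finset.prod_le_one (fun i _ => norm_nonneg _) fun i _ => hA _ _
  rcases Int.units_eq_one_or (Equiv.Perm.sign σ) with h | h
  · rwa [h, one_smul]
  · rw [h, show ((-1 : ℤˣ) • ∏ i, A (σ i) i) = -(∏ i, A (σ i) i) from by
      simp [Units.smul_def], norm_neg]
    exact h1

private lemma myMulVecLe (hu : ∀ x y : K, ‖x + y‖ ≤ max ‖x‖ ‖y‖) {m : ℕ}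
    (A : Matrix (Fin m) (Fin m) K) (hA : ∀ i j, ‖A i j‖ ≤ 1) (x : Fin m → K) :
    ‖A.mulVec x‖ ≤ ‖x‖ := by
  rw [pi_norm_le_iff_of_nonneg (norm_nonneg x)]
  intro i
  refine le_trans (le_of_eq (by rfl : ‖A.mulVec x i‖ = ‖∑ j, A i j * x j‖)) ?_
  refine mySumLe hu _ _ _ (norm_nonneg x) fun j _ => ?_
  rw [norm_mul]
  calc ‖A i j‖ * ‖x j‖ ≤ 1 * ‖x j‖ := by
        gcongr; exact hA i j
    _ = ‖x j‖ := one_mul _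
    _ ≤ ‖x‖ := norm_le_pi_norm x j

private lemma myNormPres (hu : ∀ x y : K, ‖x + y‖ ≤ max ‖x‖ ‖y‖) {m : ℕ}
    (A : Matrix (Fin m) (Fin m) K) (hA : ∀ i j, ‖A i j‖ ≤ 1) (hdet : ‖A.det‖ = 1)
    (x : Fin m → K) : ‖A.mulVec x‖ = ‖x‖ := by
  have hdet0 : A.det ≠ 0 := fun h => by simp [h] at hdet
  have hun : IsUnit A.det := isUnit_iff_ne_zero.2 hdet0
  have hAinv : ∀ i j, ‖A⁻¹ i j‖ ≤ 1 := by
    intro i j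
    rw [Matrix.inv_def, Matrix.smul_apply, smul_eq_mul, norm_mul,
      Ring.inverse_eq_inv', norm_inv, hdet, inv_one, one_mul]
    rw [Matrix.adjugate_apply]
    refine myDetLe hu _ fun a b => ?_
    rw [Matrix.updateRow_apply]
    split_ifs with h
    · rw [Pi.single_apply]; split_ifs <;> simp
    · exact hA a b
  refine le_antisymm (myMulVecLe hu A hA x) ?_
  have : A⁻¹.mulVec (A.mulVec x) = x := by
    rw [Matrix.mulVec_mulVec, Matrix.nonsing_inv_mul A hun, Matrix.one_mulVec]
  calc ‖x‖ = ‖A⁻¹.mulVec (A.mulVec x)‖ := by rw [this]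
    _ ≤ ‖A.mulVec x‖ := myMulVecLe hu _ hAinv _

end helpers

section main
variable {K : Type*} [NontriviallyNormedField K]

-- generic triple product formula
private lemma tripleApply {m : ℕ} (A G B : Matrix (Fin m) (Fin m) K) (i j : Fin m) :
    (Aᵀ * G * B) i j = ∑ a, ∑ b, A a i * (G a b * B b j) := by
  rw [Matrix.mul_assoc, Matrix.mul_apply]
  simp only [Matrix.transpose_apply, Matrix.mul_apply, Finset.mul_sum]

private theorem matDiag (hu : ∀ x y : K, ‖x + y‖ ≤ max ‖x‖ ‖y‖) (h2 : ‖(2 : K)‖ = 1) :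
    ∀ (m : ℕ) (G : Matrix (Fin m) (Fin m) K), G.IsSymm →
    ∃ P : Matrix (Fin m) (Fin m) K, (∀ i j, ‖P i j‖ ≤ 1) ∧ ‖P.det‖ = 1 ∧
      ∀ i j, i ≠ j → (Pᵀ * G * P) i j = 0 := by
  intro m
  induction m with
  | zero =>
      intro G _
      exact ⟨1, fun i => i.elim0, by simp, fun i => i.elim0⟩
  | succ n ih =>
      intro G hGs
      have hGsymm : ∀ a b, G b a = G a b := fun a b => hGs.apply a b
      by_cases hG0 : ∀ i j, G i j = 0
      · refine ⟨1, ?_, by simp, ?_⟩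
        · intro i j
          rw [Matrix.one_apply]
          split_ifs <;> simp
        · intro i j _
          simp [Matrix.mul_one, Matrix.transpose_one, Matrix.one_mul, hG0]
      -- the bilinear form as a double sum
      push_neg at hG0
      set B : (Fin (n+1) → K) → (Fin (n+1) → K) → K :=
        fun x y => ∑ a, ∑ b, x a * (G a b * y b) with hB
      have hBsingle : ∀ i j, B (Pi.single i 1) (Pi.single j 1) = G i j := by
        intro i j
        rw [hB]
        simp [Pi.single_apply, ite_mul, mul_ite, Finset.sum_ite_eq]
      have hBsub₁ : ∀ x y z, B (x - y) z = B x z - B y z := by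
        intro x y z; simp [hB, sub_mul, Finset.sum_sub_distrib]
      have hBsub₂ : ∀ x y z, B x (y - z) = B x y - B x z := by
        intro x y z; simp [hB, mul_sub, sub_mul, Finset.sum_sub_distrib]
      have hBadd₁ : ∀ x y z, B (x + y) z = B x z + B y z := by
        intro x y z; simp [hB, add_mul, Finset.sum_add_distrib]
      have hBadd₂ : ∀ x y z, B x (y + z) = B x y + B x z := by
        intro x y z; simp [hB, mul_add, add_mul, Finset.sum_add_distrib]
      have hBsmul₂ : ∀ (c : K) x y, B x (c • y) = c * B x y := by
        intro c x y
        simp only [hB, Pi.smul_apply, smul_eq_mul, Finset.mul_sum]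
        refine Finset.sum_congr rfl fun a _ => Finset.sum_congr rfl fun b _ => by ring
      have hBsymm : ∀ x y, B x y = B y x := by
        intro x y
        show (∑ a, ∑ b, x a * (G a b * y b)) = ∑ a, ∑ b, y a * (G a b * x b)
        rw [Finset.sum_comm]
        refine Finset.sum_congr rfl fun b _ => Finset.sum_congr rfl fun a _ => ?_
        rw [hGsymm b a]; ring
      have hBbound : ∀ (C : ℝ), 0 ≤ C → (∀ i j, ‖G i j‖ ≤ C) → ∀ x y,
          (∀ a, ‖x a‖ ≤ 1) → (∀ b, ‖y b‖ ≤ 1) → ‖B x y‖ ≤ C := by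
        intro C hC hGC x y hx hy
        refine mySumLe hu _ _ _ hC fun a _ => mySumLe hu _ _ _ hC fun b _ => ?_
        rw [norm_mul, norm_mul]
        calc ‖x a‖ * (‖G a b‖ * ‖y b‖) ≤ 1 * (C * 1) := by
              refine mul_le_mul (hx a) ?_ (by positivity) zero_le_one
              exact mul_le_mul (hGC a b) (hy b) (norm_nonneg _) hC
          _ = C := by ring
      -- maximal entry
      obtain ⟨p, -, hpmax⟩ := Finset.exists_max_image (Finset.univ ×ˢ Finset.univ)
        (fun p : Fin (n+1) × Fin (n+1) => ‖G p.1 p.2‖) ⟨(0, 0), by simp⟩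
      set M : ℝ := ‖G p.1 p.2‖ with hM
      have hmax : ∀ i j, ‖G i j‖ ≤ M := fun i j => hpmax (i, j) (by simp)
      have hMpos : 0 < M := by
        obtain ⟨i1, j1, h1⟩ := hG0
        exact lt_of_lt_of_le (norm_pos_iff.2 h1) (hmax i1 j1)
      have hsub : ∀ x y : K, ‖x - y‖ ≤ max ‖x‖ ‖y‖ := fun x y => by
        rw [sub_eq_add_neg]
        simpa [norm_neg] using hu x (-y)
      -- find v with ‖B v v‖ ≥ M
      have hvv : ∃ (v : Fin (n+1) → K) (k : Fin (n+1)), v k = 1 ∧ (∀ a, ‖v a‖ ≤ 1) ∧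
          M ≤ ‖B v v‖ := by
        rcases eq_or_ne p.1 p.2 with hp | hp
        · refine ⟨Pi.single p.1 1, p.1, Pi.single_eq_same _ _, ?_, ?_⟩
          · intro a; rw [Pi.single_apply]; split_ifs <;> simp
          · rw [hBsingle, hM, hp]
        · set u : Fin (n+1) → K := Pi.single p.1 1 with hu'
          set w : Fin (n+1) → K := Pi.single p.2 1 with hw'
          have hBu : B u u = G p.1 p.1 := hBsingle _ _
          have hBw : B w w = G p.2 p.2 := hBsingle _ _
          have hBuw : B u w = G p.1 p.2 := hBsingle _ _
          have hBwu : B w u = G p.2 p.1 := hBsingle _ _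
          have hdiff : B (u + w) (u + w) - B (u - w) (u - w) = (2 * 2) * G p.1 p.2 := by
            rw [hBadd₁, hBadd₂, hBadd₂, hBsub₁, hBsub₂, hBsub₂, hBu, hBw, hBuw, hBwu,
              hGsymm p.2 p.1]
            ring
          have hMle : M ≤ max ‖B (u + w) (u + w)‖ ‖B (u - w) (u - w)‖ := by
            calc M = ‖(2 * 2 : K) * G p.1 p.2‖ := by
                  rw [norm_mul, norm_mul, h2, one_mul, one_mul, hM]
              _ = ‖B (u + w) (u + w) - B (u - w) (u - w)‖ := by rw [hdiff]
              _ ≤ _ := hsub _ _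
          have hule : ∀ a, ‖u a‖ ≤ 1 := by
            intro a
            rw [hu', Pi.single_apply]; split_ifs <;> simp
          have hwle : ∀ a, ‖w a‖ ≤ 1 := by
            intro a
            rw [hw', Pi.single_apply]; split_ifs <;> simp
          have huk : u p.1 = 1 := by rw [hu']; exact Pi.single_eq_same _ _
          have hwk : w p.1 = 0 := by rw [hw']; exact Pi.single_eq_of_ne hp _
          rcases le_max_iff.mp hMle with h | h
          · exact ⟨u + w, p.1, by simp [huk, hwk], fun a =>
              le_trans (hu _ _) (max_le (hule a) (hwle a)), h⟩
          · exact ⟨u - w, p.1, by simp [huk, hwk], fun a =>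
              le_trans (hsub _ _) (max_le (hule a) (hwle a)), h⟩
      obtain ⟨v, k, hvk, hvle, hvM⟩ := hvv
      have hBvv : B v v ≠ 0 := by
        intro h0
        rw [h0, norm_zero] at hvM
        exact absurd (lt_of_lt_of_le hMpos hvM) (lt_irrefl 0)
      -- projection coefficients
      set c : Fin (n+1) → K := fun j => B (Pi.single j 1) v / B v v with hc
      have hcle : ∀ j, ‖c j‖ ≤ 1 := by
        intro j
        rw [hc]
        simp only [norm_div]
        rw [div_le_one (norm_pos_iff.2 hBvv)]
        refine le_trans ?_ hvM
        refine hBbound M (le_of_lt hMpos) hmax _ _ ?_ hvle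
        intro a; rw [Pi.single_apply]; split_ifs <;> simp
      -- the base change matrix for the first step
      set P : Matrix (Fin (n+1)) (Fin (n+1)) K :=
        Matrix.of fun a j => if j = k then v a else (Pi.single j 1 : Fin (n+1) → K) a - c j * v a with hP
      have hPapp : ∀ a j, P a j = if j = k then v a else (Pi.single j 1 : Fin (n+1) → K) a - c j * v a :=
        fun a j => rfl
      have hPent : ∀ a j, ‖P a j‖ ≤ 1 := by
        intro a j
        rw [hPapp]
        split_ifs with h
        · exact hvle a
        · refine le_trans (hsub _ _) (max_le ?_ ?_)
          · rw [Pi.single_apply]; split_ifs <;> simp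
          · rw [norm_mul]
            calc ‖c j‖ * ‖v a‖ ≤ 1 * 1 :=
                  mul_le_mul (hcle j) (hvle a) (norm_nonneg _) zero_le_one
              _ = 1 := one_mul 1
      -- determinant of P
      have hPdet : ‖P.det‖ = 1 := by
        set Q : Matrix (Fin (n+1)) (Fin (n+1)) K := (1 : Matrix _ _ K).updateCol k v
          with hQ
        set R : Matrix (Fin (n+1)) (Fin (n+1)) K :=
          Matrix.of fun i j => if i = k then (if j = k then (1:K) else -c j)
            else if i = j then 1 else 0 with hR
        have hQapp : ∀ a b, Q a b = if b = k then v a else if a = b then 1 else 0 := by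
          intro a b; rw [hQ, Matrix.updateCol_apply, Matrix.one_apply]
        have hRapp : ∀ a b, R a b = if a = k then (if b = k then (1:K) else -c b)
            else if a = b then 1 else 0 := fun a b => rfl
        have hPQR : P = Q * R := by
          ext a j
          rw [Matrix.mul_apply, hPapp]
          by_cases hj : j = k
          · subst hj
            have hterm : ∀ b, Q a b * R b j = if b = j then v a else 0 := by
              intro b
              rw [hQapp, hRapp]
              by_cases hb : b = j <;> simp [hb]
            rw [Finset.sum_congr rfl fun b _ => hterm b, Finset.sum_ite_eq' Finset.univ j
              fun _ => v a]
            simp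
          · have hterm : ∀ b, Q a b * R b j =
                (if b = k then -(c j * v a) else 0) + (if b = j then (if a = j then (1:K) else 0) else 0) := by
              intro b
              rw [hQapp, hRapp]
              by_cases hbk : b = k
              · subst hbk
                simp [hj, Ne.symm hj]
                ring
              · by_cases hbj : b = j <;> simp [hbk, hbj, hj]
            rw [Finset.sum_congr rfl fun b _ => hterm b, Finset.sum_add_distrib,
              Finset.sum_ite_eq' Finset.univ k fun _ => -(c j * v a),
              Finset.sum_ite_eq' Finset.univ j fun _ => if a = j then (1:K) else 0,
              if_pos (Finset.mem_univ k), if_pos (Finset.mem_univ j), if_neg hj,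
              Pi.single_apply]
            ring
        have hQdet : Q.det = 1 := by
          rw [hQ, ← Matrix.cramer_apply, Matrix.cramer_one]
          exact hvk
        have hRdet : R.det = 1 := by
          rw [← Matrix.det_transpose]
          have hRT : Rᵀ = (1 : Matrix _ _ K).updateCol k
              (fun j => if j = k then (1:K) else -c j) := by
            ext i j
            rw [Matrix.transpose_apply, Matrix.updateCol_apply, Matrix.one_apply, hRapp]
            by_cases hjk : j = k
            · simp [hjk]
            · by_cases hij : i = j <;> simp [hjk, hij, eq_comm]
          rw [hRT, ← Matrix.cramer_apply, Matrix.cramer_one]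
          simp
        rw [hPQR, Matrix.det_mul, hQdet, hRdet]
        simp
      set H : Matrix (Fin (n+1)) (Fin (n+1)) K := Pᵀ * G * P with hHdef
      have hHB : ∀ i j, H i j = B (fun a => P a i) (fun a => P a j) := by
        intro i j
        rw [hHdef, tripleApply, hB]
      have hcolk : (fun a => P a k) = v := by
        funext a; rw [hPapp]; simp
      have hcolj : ∀ j, j ≠ k → (fun a => P a j) =
          (Pi.single j 1 - c j • v : Fin (n+1) → K) := by
        intro j hj
        funext a
        rw [hPapp, if_neg hj]
        simp [smul_eq_mul]
      have hckey : ∀ j, c j * B v v = B (Pi.single j 1) v := by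
        intro j
        rw [hc]
        exact div_mul_cancel₀ _ hBvv
      have hHkj : ∀ j, j ≠ k → H k j = 0 := by
        intro j hj
        rw [hHB, hcolk, hcolj j hj, hBsub₂, hBsmul₂, hBsymm v (Pi.single j 1), hckey,
          sub_self]
      have hHsymm : ∀ a b, H a b = H b a := by
        intro a b
        rw [hHB, hHB, hBsymm]
      have hHjk : ∀ j, j ≠ k → H j k = 0 := fun j hj => by rw [hHsymm, hHkj j hj]
      -- the restricted matrix
      set G' : Matrix (Fin n) (Fin n) K :=
        Matrix.of fun a b => H (k.succAbove a) (k.succAbove b) with hG'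
      have hG'app : ∀ a b, G' a b = H (k.succAbove a) (k.succAbove b) := fun a b => rfl
      have hG'symm : G'.IsSymm := by
        rw [Matrix.IsSymm]
        ext a b
        rw [Matrix.transpose_apply, hG'app, hG'app, hHsymm]
      obtain ⟨P', hP'ent, hP'det, hP'diag⟩ := ih G' hG'symm
      -- the block matrix E
      set σ : Fin (n+1) ≃ (Fin n) ⊕ Unit :=
        (finSuccEquiv' k).trans (Equiv.optionEquivSumPUnit (Fin n)) with hσ
      set E : Matrix (Fin (n+1)) (Fin (n+1)) K :=
        (Matrix.fromBlocks P' 0 0 (1 : Matrix Unit Unit K)).submatrix σ σ with hE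
      have hσk : σ k = Sum.inr Unit.unit := by
        rw [hσ]
        simp [finSuccEquiv'_at]
      have hσs : ∀ a, σ (k.succAbove a) = Sum.inl a := by
        intro a
        rw [hσ]
        simp [finSuccEquiv'_succAbove]
      have hEkk : E k k = 1 := by
        rw [hE, Matrix.submatrix_apply, hσk, Matrix.fromBlocks_apply₂₂, Matrix.one_apply_eq]
      have hEks : ∀ b, E k (k.succAbove b) = 0 := by
        intro b
        rw [hE, Matrix.submatrix_apply, hσk, hσs, Matrix.fromBlocks_apply₂₁]
        rfl
      have hEsk : ∀ a, E (k.succAbove a) k = 0 := by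
        intro a
        rw [hE, Matrix.submatrix_apply, hσk, hσs, Matrix.fromBlocks_apply₁₂]
        rfl
      have hEss : ∀ a b, E (k.succAbove a) (k.succAbove b) = P' a b := by
        intro a b
        rw [hE, Matrix.submatrix_apply, hσs, hσs, Matrix.fromBlocks_apply₁₁]
      have hEent : ∀ i j, ‖E i j‖ ≤ 1 := by
        intro i j
        rw [hE, Matrix.submatrix_apply]
        rcases hσi : σ i with a | u <;> rcases hσj : σ j with b | u'
        · rw [Matrix.fromBlocks_apply₁₁]; exact hP'ent a b
        · rw [Matrix.fromBlocks_apply₁₂]; simp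
        · rw [Matrix.fromBlocks_apply₂₁]; simp
        · rw [Matrix.fromBlocks_apply₂₂]
          cases u; cases u'
          rw [Matrix.one_apply_eq]
          simp
      have hEdet : ‖E.det‖ = 1 := by
        rw [hE, Matrix.det_submatrix_equiv_self, Matrix.det_fromBlocks_zero₂₁,
          Matrix.det_one, mul_one]
        exact hP'det
      -- assemble
      refine ⟨P * E, ?_, ?_, ?_⟩
      · intro i j
        rw [Matrix.mul_apply]
        refine mySumLe hu _ _ _ zero_le_one fun a _ => ?_
        rw [norm_mul]
        calc ‖P i a‖ * ‖E a j‖ ≤ 1 * 1 :=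
              mul_le_mul (hPent i a) (hEent a j) (norm_nonneg _) zero_le_one
          _ = 1 := one_mul 1
      · rw [Matrix.det_mul, norm_mul, hPdet, hEdet, one_mul]
      · intro i j hij
        have hTH : (P * E)ᵀ * G * (P * E) = Eᵀ * H * E := by
          rw [Matrix.transpose_mul, hHdef]
          simp only [Matrix.mul_assoc]
        rw [hTH, tripleApply]
        rcases eq_or_ne i k with hik | hik
        · rw [hik] at hij ⊢
          obtain ⟨j0, rfl⟩ := Fin.exists_succAbove_eq (Ne.symm hij)
          have hH1 : ∀ b', H k (k.succAbove b') = 0 :=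
            fun b' => hHkj _ (Fin.succAbove_ne k b')
          simp only [Fin.sum_univ_succAbove _ k, hEkk, hEks, hEsk, hH1, one_mul, zero_mul,
            mul_zero, add_zero, zero_add, Finset.sum_const_zero]
        · rcases eq_or_ne j k with hjk | hjk
          · rw [hjk] at hij ⊢
            obtain ⟨i0, rfl⟩ := Fin.exists_succAbove_eq hik
            have hH2 : ∀ a', H (k.succAbove a') k = 0 :=
              fun a' => hHjk _ (Fin.succAbove_ne k a')
            simp only [Fin.sum_univ_succAbove _ k, hEkk, hEks, hEsk, hH2, one_mul, zero_mul,
              mul_zero, add_zero, zero_add, Finset.sum_const_zero]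
          · obtain ⟨i0, rfl⟩ := Fin.exists_succAbove_eq hik
            obtain ⟨j0, rfl⟩ := Fin.exists_succAbove_eq hjk
            have hne : i0 ≠ j0 := by
              intro h
              exact hij (by rw [h])
            rw [← hP'diag i0 j0 hne, tripleApply]
            simp only [Fin.sum_univ_succAbove _ k, hEks, hEsk, hEss, zero_mul, mul_zero,
              Finset.sum_const_zero, zero_add, add_zero, hG'app]

end main
/-- Over a non-archimedean local field of residual characteristic not 2, every quadratic
form on `Kⁿ` with nondegenerate polar bilinear form admits an orthogonal basis whose base
change preserves the sup norm. -/
theorem stmt1 (K : Type*) [NontriviallyNormedField K] [LocallyCompactSpace K]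
    (hu : ∀ x y : K, ‖x + y‖ ≤ max ‖x‖ ‖y‖) (h2 : ‖(2 : K)‖ = 1)
    (n : ℕ) (q : QuadraticForm K (Fin n → K))
    (hq : LinearMap.BilinForm.Nondegenerate (QuadraticMap.polarBilin q)) :
    ∃ e : Module.Basis (Fin n) K (Fin n → K),
      (∀ x : Fin n → K, ‖∑ i, x i • e i‖ = ‖x‖) ∧
      (∀ i j, i ≠ j → QuadraticMap.polar q (e i) (e j) = 0) := by
  classical
  set G : Matrix (Fin n) (Fin n) K :=
    Matrix.of fun i j => QuadraticMap.polar q (Pi.single i 1) (Pi.single j 1) with hG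
  have hGapp : ∀ i j, G i j = QuadraticMap.polar q (Pi.single i 1) (Pi.single j 1) :=
    fun i j => rfl
  have hGs : G.IsSymm := by
    rw [Matrix.IsSymm]
    ext i j
    rw [Matrix.transpose_apply, hGapp, hGapp]
    exact QuadraticMap.polar_comm _ _ _
  obtain ⟨P, hPent, hPdet, hPdiag⟩ := matDiag hu h2 n G hGs
  have hdet0 : P.det ≠ 0 := fun h => by simp [h] at hPdet
  have hinv : Invertible P := P.invertibleOfIsUnitDet (isUnit_iff_ne_zero.2 hdet0)
  set e : Module.Basis (Fin n) K (Fin n → K) :=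
    (Pi.basisFun K (Fin n)).map (P.toLinearEquiv' hinv) with he'
  have he : ∀ i a, e i a = P a i := by
    intro i a
    rw [he', Module.Basis.map_apply]
    have h1 : (P.toLinearEquiv' hinv) (Pi.basisFun K (Fin n) i) =
        P.mulVec (Pi.basisFun K (Fin n) i) := rfl
    rw [h1]
    simp only [Pi.basisFun_apply, Matrix.mulVec, dotProduct]
    simp [Pi.single_apply, mul_ite, Finset.sum_ite_eq]
  refine ⟨e, ?_, ?_⟩
  · intro x
    have hsum : (∑ i, x i • e i) = P.mulVec x := by
      funext a
      rw [Finset.sum_apply]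
      simp only [Pi.smul_apply, smul_eq_mul, he, Matrix.mulVec, dotProduct]
      exact Finset.sum_congr rfl fun i _ => mul_comm _ _
    rw [hsum]
    exact myNormPres hu P hPent hPdet x
  · intro i j hij
    have hcol : ∀ i, (e i : Fin n → K) = ∑ a, P a i • (Pi.single a 1 : Fin n → K) := by
      intro i
      funext b
      rw [Finset.sum_apply, he]
      simp only [Pi.smul_apply, smul_eq_mul, Pi.single_apply, mul_ite, mul_one, mul_zero]
      rw [Finset.sum_ite_eq, if_pos (Finset.mem_univ b)]
    have hpolar : QuadraticMap.polar q (e i) (e j) = (Pᵀ * G * P) i j := by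
      rw [tripleApply, ← QuadraticMap.polarBilin_apply_apply, hcol i, hcol j]
      simp only [map_sum, _root_.map_smul, LinearMap.sum_apply, LinearMap.smul_apply, smul_eq_mul,
        QuadraticMap.polarBilin_apply_apply]
      simp only [Finset.mul_sum]
      rw [Finset.sum_comm]
      refine Finset.sum_congr rfl fun a _ => Finset.sum_congr rfl fun b _ => ?_
      rw [hGapp]
      ring
    rw [hpolar]
    exact hPdiag i j hij
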